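/- Let b > 1, m > b − 1, and let F be a differentiable cumulative distribution function on [0, ℓ̄] with continuous density f = F′ > 0, F(0) = 0, F(ℓ̄) = 1, and ℓ̄ > b − 1, and suppose the hazard rate h(ℓ) = f(ℓ)/(1−F(ℓ)) is monotone increasing on [0, ℓ̄). Define Ψ(ℓ; π) = ((1+m−b)/(1−F(ℓ)))·(π/(1−π)) − (b−1)·F(ℓ)/(1−F(ℓ)), let ℓ′ ∈ (b−1, ℓ̄) be the unique solution of ℓ − 1/h(ℓ) = b − 1, and let π′ = (ℓ′(1−F(ℓ′)) + (b−1)F(ℓ′)) / (1+m−b + ℓ′(1−F(ℓ′)) + (b−1)F(ℓ′)). Then for every π with (b−1)/m < π < π′, the equation Ψ(ℓ; π) = ℓ has exactly two solutions ℓ_L(π) < ℓ_H(π) in (0, ℓ̄), both lying in (b−1, ℓ̄); moreover ℓ_L(π) is strictly increasing in π and ℓ_H(π) is strictly decreasing in π on ((b−1)/m, π′). -/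

import Mathlib

/-- The reduced-form best-response function. -/
noncomputable def Psi (b m : ℝ) (F : ℝ → ℝ) (l q : ℝ) : ℝ :=
  (1 + m - b) / (1 - F l) * (q / (1 - q)) - (b - 1) * (F l / (1 - F l))

/-- Auxiliary function for the proof of `stmt7`. -/
noncomputable def Gaux (b : ℝ) (F : ℝ → ℝ) (l : ℝ) : ℝ := l * (1 - F l) + (b - 1) * F l

set_option maxHeartbeats 1600000 in
/-- under the Monotone Hazard Rate assumption, with `ℓ′ ∈ (b−1, ℓ̄)` the
unique solution of `ℓ − 1/h(ℓ) = b − 1` and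
`π′ = (ℓ′(1−F(ℓ′)) + (b−1)F(ℓ′)) / (1+m−b + ℓ′(1−F(ℓ′)) + (b−1)F(ℓ′))`, for every
`π ∈ ((b−1)/m, π′)` the equation `Ψ(ℓ; π) = ℓ` has exactly two solutions
`ℓ_L(π) < ℓ_H(π)` in `(0, ℓ̄)`, both lying in `(b−1, ℓ̄)`; moreover `ℓ_L` is strictly
increasing and `ℓ_H` strictly decreasing in `π` on `((b−1)/m, π′)`. -/
theorem stmt7 (b m lbar : ℝ) (F f : ℝ → ℝ) (l' q' : ℝ)
    (hb : 1 < b) (hm : b - 1 < m)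
    (hF : ∀ x ∈ Set.Icc 0 lbar, HasDerivAt F (f x) x)
    (hf : ContinuousOn f (Set.Icc 0 lbar))
    (hfpos : ∀ x ∈ Set.Icc 0 lbar, 0 < f x)
    (hF0 : F 0 = 0) (hF1 : F lbar = 1)
    (hlbar : b - 1 < lbar)
    (hmono : MonotoneOn (fun l => f l / (1 - F l)) (Set.Ico 0 lbar))
    (hl' : l' ∈ Set.Ioo (b - 1) lbar)
    (heq : l' - (f l' / (1 - F l'))⁻¹ = b - 1)
    (hq' : q' = (l' * (1 - F l') + (b - 1) * F l') /
      (1 + m - b + l' * (1 - F l') + (b - 1) * F l')) :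
    (∀ q ∈ Set.Ioo ((b - 1) / m) q',
      ∃ lL lH : ℝ, lL < lH ∧ lL ∈ Set.Ioo (b - 1) lbar ∧ lH ∈ Set.Ioo (b - 1) lbar ∧
        Psi b m F lL q = lL ∧ Psi b m F lH q = lH ∧
        ∀ l ∈ Set.Ioo (0 : ℝ) lbar, Psi b m F l q = l → l = lL ∨ l = lH) ∧
    (∀ q₁ ∈ Set.Ioo ((b - 1) / m) q', ∀ q₂ ∈ Set.Ioo ((b - 1) / m) q', q₁ < q₂ →
      ∀ lL₁ lH₁ lL₂ lH₂ : ℝ,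
        lL₁ < lH₁ → lL₁ ∈ Set.Ioo (0 : ℝ) lbar → lH₁ ∈ Set.Ioo (0 : ℝ) lbar →
        Psi b m F lL₁ q₁ = lL₁ → Psi b m F lH₁ q₁ = lH₁ →
        lL₂ < lH₂ → lL₂ ∈ Set.Ioo (0 : ℝ) lbar → lH₂ ∈ Set.Ioo (0 : ℝ) lbar →
        Psi b m F lL₂ q₂ = lL₂ → Psi b m F lH₂ q₂ = lH₂ →
        lL₁ < lL₂ ∧ lH₂ < lH₁) := by
  have hb1 : (0:ℝ) < b - 1 := by linarith
  have hm0 : (0:ℝ) < m := by linarith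
  have hlbar0 : (0:ℝ) < lbar := by linarith
  have hK : (0:ℝ) < 1 + m - b := by linarith
  obtain ⟨hl'1, hl'2⟩ := hl'
  have hFc : ContinuousOn F (Set.Icc 0 lbar) := fun x hx =>
    (hF x hx).continuousAt.continuousWithinAt
  have hFmono : StrictMonoOn F (Set.Icc 0 lbar) := by
    apply strictMonoOn_of_deriv_pos (convex_Icc 0 lbar) hFc
    intro x hx
    rw [interior_Icc] at hx
    rw [(hF x (Set.mem_Icc_of_Ioo hx)).deriv]
    exact hfpos x (Set.mem_Icc_of_Ioo hx)
  have hF01 : ∀ x ∈ Set.Icc 0 lbar, 0 ≤ F x := by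
    intro x hx
    rcases eq_or_lt_of_le hx.1 with h | h
    · rw [← h, hF0]
    · have := hFmono (Set.left_mem_Icc.2 hlbar0.le) hx h
      rw [hF0] at this; linarith
  have hFlt1 : ∀ x ∈ Set.Ico 0 lbar, F x < 1 := by
    intro x hx
    have := hFmono ⟨hx.1, hx.2.le⟩ (Set.right_mem_Icc.2 hlbar0.le) hx.2
    rwa [hF1] at this
  have hG' : ∀ x ∈ Set.Icc 0 lbar, HasDerivAt (Gaux b F) ((1 - F x) - (x - (b-1)) * f x) x := by
    intro x hx
    have h1 := ((hasDerivAt_id x).mul (((hasDerivAt_const x (1:ℝ)).sub (hF x hx)))).add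
      ((hF x hx).const_mul (b-1))
    exact (show HasDerivAt (Gaux b F) _ x from h1).congr_deriv
      (by simp only [Pi.sub_apply, id_eq]; ring)
  have hGcont : ContinuousOn (Gaux b F) (Set.Icc 0 lbar) := fun x hx =>
    (hG' x hx).continuousAt.continuousWithinAt
  have hl'Ico : l' ∈ Set.Ico 0 lbar := ⟨by linarith, hl'2⟩
  have hl'Icc : l' ∈ Set.Icc 0 lbar := ⟨by linarith, hl'2.le⟩
  have hfl' : 0 < f l' := hfpos l' hl'Icc
  have hFl' : F l' < 1 := hFlt1 l' hl'Ico
  have heq' : l' - (1 - F l') / f l' = b - 1 := by rwa [inv_div] at heq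
  -- sign of derivative of Gaux b F
  have hphiA : ∀ x ∈ Set.Ico 0 lbar, x < l' → (x - (b-1)) * f x < 1 - F x := by
    intro x hx hxl
    have hfx : 0 < f x := hfpos x ⟨hx.1, hx.2.le⟩
    have hFx : F x < 1 := hFlt1 x hx
    rcases le_or_gt x (b-1) with h | h
    · nlinarith
    · have hr := hmono hx hl'Ico hxl.le
      simp only at hr
      have hcross : f x * (1 - F l') ≤ f l' * (1 - F x) :=
        (div_le_div_iff₀ (by linarith) (by linarith)).mp hr
      have h2 : l' - (b-1) ≤ (1 - F x) / f x := by
        rw [le_div_iff₀ hfx, ← heq']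
        have : (1 - F l') / f l' * f x ≤ 1 - F x := by
          rw [div_mul_eq_mul_div, div_le_iff₀ hfl']
          nlinarith
        nlinarith [this]
      have : x - (b-1) < (1 - F x) / f x := by linarith
      calc (x - (b-1)) * f x < (1 - F x) / f x * f x := by
            exact mul_lt_mul_of_pos_right this hfx
        _ = 1 - F x := by field_simp
  have hphiB : ∀ x ∈ Set.Ico 0 lbar, l' < x → 1 - F x < (x - (b-1)) * f x := by
    intro x hx hxl
    have hfx : 0 < f x := hfpos x ⟨hx.1, hx.2.le⟩
    have hFx : F x < 1 := hFlt1 x hx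
    have hr := hmono hl'Ico hx hxl.le
    simp only at hr
    have hcross : f l' * (1 - F x) ≤ f x * (1 - F l') :=
      (div_le_div_iff₀ (by linarith) (by linarith)).mp hr
    have h2 : (1 - F x) / f x ≤ l' - (b-1) := by
      rw [div_le_iff₀ hfx, ← heq']
      have : (1 - F l') / f l' * f x ≥ 1 - F x := by
        rw [div_mul_eq_mul_div, ge_iff_le, le_div_iff₀ hfl']
        nlinarith
      nlinarith [this]
    have h3 : (1 - F x) / f x < x - (b-1) := by linarith
    calc 1 - F x = (1 - F x) / f x * f x := by field_simp
      _ < (x - (b-1)) * f x := mul_lt_mul_of_pos_right h3 hfx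
  have hGmono : StrictMonoOn (Gaux b F) (Set.Icc 0 l') := by
    apply strictMonoOn_of_deriv_pos (convex_Icc 0 l')
      (hGcont.mono (Set.Icc_subset_Icc le_rfl hl'2.le))
    intro x hx
    rw [interior_Icc] at hx
    have hx' : x ∈ Set.Icc 0 lbar := ⟨hx.1.le, by linarith [hx.2]⟩
    rw [(hG' x hx').deriv]
    have := hphiA x ⟨hx.1.le, by linarith [hx.2]⟩ hx.2
    linarith
  have hGanti : StrictAntiOn (Gaux b F) (Set.Icc l' lbar) := by
    apply strictAntiOn_of_deriv_neg (convex_Icc l' lbar)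
      (hGcont.mono (Set.Icc_subset_Icc (by linarith) le_rfl))
    intro x hx
    rw [interior_Icc] at hx
    have hx' : x ∈ Set.Icc 0 lbar := ⟨by linarith [hx.1], hx.2.le⟩
    rw [(hG' x hx').deriv]
    have := hphiB x ⟨by linarith [hx.1], hx.2⟩ hx.1
    linarith
  have hGb : Gaux b F (b-1) = b-1 := by simp only [Gaux]; ring
  have hGlbar : Gaux b F lbar = b-1 := by simp only [Gaux, hF1]; ring
  have hMgt : b - 1 < Gaux b F l' := by
    have := hGmono ⟨hb1.le, hl'1.le⟩ (Set.right_mem_Icc.2 (by linarith)) hl'1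
    rwa [hGb] at this
  have hA : Gaux b F l' = l' * (1 - F l') + (b - 1) * F l' := rfl
  have hApos : 0 < l' * (1 - F l') + (b - 1) * F l' := by
    rw [← hA]; linarith [hMgt]
  have hden : (0:ℝ) < 1 + m - b + l' * (1 - F l') + (b - 1) * F l' := by linarith
  have hq'lt1 : q' < 1 := by
    rw [hq', div_lt_one hden]; linarith
  have hq'c : (1 + m - b) * (q' / (1 - q')) = Gaux b F l' := by
    have hDne : (1 + m - b + l' * (1 - F l') + (b - 1) * F l') ≠ 0 := ne_of_gt hden
    have h2 : q' / (1 - q') = (l' * (1 - F l') + (b - 1) * F l') / (1 + m - b) := by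
      rw [div_eq_div_iff (ne_of_gt (by linarith : (0:ℝ) < 1 - q')) (ne_of_gt hK), hq']
      rw [one_sub_div hDne, div_mul_eq_mul_div, mul_div_assoc']
      congr 1; ring
    rw [h2, hA, mul_comm, div_mul_cancel₀ _ (ne_of_gt hK)]
  -- fixed point characterization
  have hfix : ∀ q : ℝ, q < 1 → ∀ l ∈ Set.Ico 0 lbar,
      (Psi b m F l q = l ↔ Gaux b F l = (1+m-b) * (q/(1-q))) := by
    intro q hq1 l hl
    have h1 : 0 < 1 - F l := by linarith [hFlt1 l hl]
    have h2 : 0 < 1 - q := by linarith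
    have hiden : Psi b m F l q - l = ((1+m-b) * (q/(1-q)) - Gaux b F l) / (1 - F l) := by
      simp only [Psi, Gaux]
      field_simp
      ring
    constructor
    · intro h
      have h0 : ((1+m-b) * (q/(1-q)) - Gaux b F l) / (1 - F l) = 0 := by
        rw [← hiden, h, sub_self]
      rcases div_eq_zero_iff.mp h0 with h' | h'
      · linarith
      · linarith
    · intro h
      have : Psi b m F l q - l = 0 := by rw [hiden, h, sub_self, zero_div]
      linarith
  -- the key existence/uniqueness statement
  have key : ∀ q ∈ Set.Ioo ((b-1)/m) q',
      ∃ lL lH : ℝ, lL ∈ Set.Ioo (b-1) l' ∧ lH ∈ Set.Ioo l' lbar ∧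
        Gaux b F lL = (1+m-b) * (q/(1-q)) ∧ Gaux b F lH = (1+m-b) * (q/(1-q)) ∧
        ∀ l ∈ Set.Ioo (0:ℝ) lbar, Psi b m F l q = l → l = lL ∨ l = lH := by
    intro q hq
    have hq0 : 0 < q := lt_trans (div_pos hb1 hm0) hq.1
    have hq1 : q < 1 := lt_trans hq.2 hq'lt1
    have h2 : 0 < 1 - q := by linarith
    have hc1 : b - 1 < (1+m-b) * (q/(1-q)) := by
      have hbq : b - 1 < q * m := (div_lt_iff₀ hm0).mp hq.1
      rw [mul_div_assoc', lt_div_iff₀ h2]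
      nlinarith
    have hc2 : (1+m-b) * (q/(1-q)) < Gaux b F l' := by
      have hq'0 : 0 < 1 - q' := by linarith [hq'lt1]
      have : (1+m-b) * (q/(1-q)) < (1+m-b) * (q'/(1-q')) := by
        apply mul_lt_mul_of_pos_left _ hK
        rw [div_lt_div_iff₀ h2 hq'0]
        nlinarith [hq.2]
      rwa [hq'c] at this
    obtain ⟨lL, hlL, hGlL⟩ := intermediate_value_Ioo hl'1.le
      (hGcont.mono (Set.Icc_subset_Icc hb1.le hl'2.le))
      (by rw [hGb]; exact ⟨hc1, hc2⟩)
    obtain ⟨lH, hlH, hGlH⟩ := intermediate_value_Ioo' (by linarith : l' ≤ lbar)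
      (hGcont.mono (Set.Icc_subset_Icc (by linarith) le_rfl))
      (by rw [hGlbar]; exact ⟨hc1, hc2⟩)
    refine ⟨lL, lH, hlL, hlH, hGlL, hGlH, ?_⟩
    intro l hl hPsi
    have hGl : Gaux b F l = (1+m-b) * (q/(1-q)) := (hfix q hq1 l ⟨hl.1.le, hl.2⟩).mp hPsi
    rcases le_or_gt l l' with h | h
    · left
      exact hGmono.injOn ⟨hl.1.le, h⟩ ⟨by linarith [hlL.1], hlL.2.le⟩
        (by rw [hGl, hGlL])
    · right
      exact hGanti.injOn ⟨h.le, hl.2.le⟩ ⟨hlH.1.le, hlH.2.le⟩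
        (by rw [hGl, hGlH])
  constructor
  · intro q hq
    obtain ⟨lL, lH, hlL, hlH, hGlL, hGlH, huniq⟩ := key q hq
    have hq1 : q < 1 := lt_trans hq.2 hq'lt1
    refine ⟨lL, lH, by linarith [hlL.2, hlH.1],
      ⟨hlL.1, by linarith [hlL.2]⟩, ⟨by linarith [hlH.1], hlH.2⟩,
      (hfix q hq1 lL ⟨by linarith [hlL.1], by linarith [hlL.2]⟩).mpr hGlL,
      (hfix q hq1 lH ⟨by linarith [hlH.1], hlH.2⟩).mpr hGlH, huniq⟩
  · intro q₁ hq₁ q₂ hq₂ hqlt lL₁ lH₁ lL₂ lH₂ h₁ hL₁m hH₁m hP1 hP2 h₂ hL₂m hH₂m hP3 hP4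
    obtain ⟨a₁, c₁, ha₁, hc₁, hGa₁, hGc₁, hu₁⟩ := key q₁ hq₁
    obtain ⟨a₂, c₂, ha₂, hc₂, hGa₂, hGc₂, hu₂⟩ := key q₂ hq₂
    have ident : ∀ (x y a c : ℝ), x < y → a ∈ Set.Ioo (b-1) l' → c ∈ Set.Ioo l' lbar →
        (x = a ∨ x = c) → (y = a ∨ y = c) → x = a ∧ y = c := by
      intro x y a c hxy ha hc hx hy
      rcases hx with h | h
      · refine ⟨h, ?_⟩
        rcases hy with h' | h'
        · exfalso; rw [h, h'] at hxy; exact lt_irrefl a hxy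
        · exact h'
      · exfalso
        rcases hy with h' | h'
        · rw [h, h'] at hxy
          have := ha.2; have := hc.1; linarith
        · rw [h, h'] at hxy; exact lt_irrefl c hxy
    obtain ⟨e1, e2⟩ := ident lL₁ lH₁ a₁ c₁ h₁ ha₁ hc₁
      (hu₁ lL₁ hL₁m hP1) (hu₁ lH₁ hH₁m hP2)
    obtain ⟨e3, e4⟩ := ident lL₂ lH₂ a₂ c₂ h₂ ha₂ hc₂
      (hu₂ lL₂ hL₂m hP3) (hu₂ lH₂ hH₂m hP4)
    have hq₁0 : 0 < q₁ := lt_trans (div_pos hb1 hm0) hq₁.1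
    have hq₂1 : q₂ < 1 := lt_trans hq₂.2 hq'lt1
    have hq₁1 : q₁ < 1 := lt_trans hqlt hq₂1
    have hcc : (1+m-b) * (q₁/(1-q₁)) < (1+m-b) * (q₂/(1-q₂)) := by
      apply mul_lt_mul_of_pos_left _ hK
      rw [div_lt_div_iff₀ (by linarith) (by linarith)]
      nlinarith
    have hLlt : a₁ < a₂ := by
      by_contra hcon
      push_neg at hcon
      have := hGmono.monotoneOn ⟨by linarith [ha₂.1], ha₂.2.le⟩
        ⟨by linarith [ha₁.1], ha₁.2.le⟩ hcon
      rw [hGa₁, hGa₂] at this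
      linarith
    have hHlt : c₂ < c₁ := by
      by_contra hcon
      push_neg at hcon
      have := hGanti.antitoneOn ⟨hc₁.1.le, hc₁.2.le⟩
        ⟨hc₂.1.le, hc₂.2.le⟩ hcon
      rw [hGc₁, hGc₂] at this
      linarith
    rw [e1, e2, e3, e4]
    exact ⟨hLlt, hHlt⟩
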